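/- Let G be a connected, well-covered, locally triangle-free graph with α(G) ≥ 3 that is not a join of two proper subgraphs, and such that every nontrivial connected component of G_v = G \ N_G[v] is in W₂ for every vertex v. Then G itself is in W₂. -/

import Mathlib

open Set

variable {V : Type*}

/-- `S` is an independent set of `G` contained in the vertex subset `W`
(i.e. an independent set of the induced subgraph `G[W]`). -/
def IsIndepOn (G : SimpleGraph V) (W S : Set V) : Prop :=
  S ⊆ W ∧ ∀ ⦃x⦄, x ∈ S → ∀ ⦃y⦄, y ∈ S → ¬ G.Adj x y

/-- `S` is a maximal independent set of the induced subgraph `G[W]`. -/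
def MaxIndepOn (G : SimpleGraph V) (W : Set V) (S : Finset V) : Prop :=
  IsIndepOn G W ↑S ∧ ∀ v ∈ W, v ∉ S → ¬ IsIndepOn G W (insert v ↑S)

/-- The independence number of the induced subgraph `G[W]`. -/
noncomputable def indepNumOn (G : SimpleGraph V) (W : Set V) : ℕ :=
  sSup {n | ∃ S : Finset V, IsIndepOn G W ↑S ∧ S.card = n}

/-- The induced subgraph `G[W]` is well-covered: every maximal independent set
has cardinality equal to the independence number. -/
def WellCoveredOn (G : SimpleGraph V) (W : Set V) : Prop :=
  ∀ S : Finset V, MaxIndepOn G W S → S.card = indepNumOn G W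

/-- The independence number `α(G)`. -/
noncomputable def indepNum (G : SimpleGraph V) : ℕ := indepNumOn G Set.univ

/-- `G` is well-covered. -/
def WellCovered (G : SimpleGraph V) : Prop := WellCoveredOn G Set.univ

/-- The induced subgraph `G[W]` has no isolated vertices. -/
def NoIsolatedOn (G : SimpleGraph V) (W : Set V) : Prop :=
  ∀ v ∈ W, ∃ u ∈ W, G.Adj v u

/-- The induced subgraph `G[W]` is in the class `W₂`: it has no isolated
vertices, is well-covered, and removing any vertex leaves a well-covered graph
with the same independence number. -/
def W2On (G : SimpleGraph V) (W : Set V) : Prop :=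
  NoIsolatedOn G W ∧ WellCoveredOn G W ∧
    ∀ v ∈ W, WellCoveredOn G (W \ {v}) ∧ indepNumOn G (W \ {v}) = indepNumOn G W

/-- `G` is in the class `W₂`. -/
def W2 (G : SimpleGraph V) : Prop := W2On G Set.univ

/-- The closed neighborhood `N_G[S]` of a set of vertices `S`. -/
def nbhd (G : SimpleGraph V) (S : Set V) : Set V :=
  {v | v ∈ S ∨ ∃ u ∈ S, G.Adj u v}

/-- The vertex set of `G_S = G \ N_G[S]`. -/
def GDel (G : SimpleGraph V) (S : Set V) : Set V := Set.univ \ nbhd G S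

/-- The induced subgraph `G[W]` is triangle-free. -/
def TriangleFreeOn (G : SimpleGraph V) (W : Set V) : Prop :=
  ∀ x ∈ W, ∀ y ∈ W, ∀ z ∈ W, ¬ (G.Adj x y ∧ G.Adj y z ∧ G.Adj x z)

/-- `G` is locally triangle-free: `G_v` is triangle-free for every vertex `v`. -/
def LocallyTriangleFree (G : SimpleGraph V) : Prop :=
  ∀ v : V, TriangleFreeOn G (GDel G {v})

/-- `G` is a join of two proper (nonempty, disjoint) subgraphs. -/
def IsJoin (G : SimpleGraph V) : Prop :=
  ∃ V₁ V₂ : Set V, V₁.Nonempty ∧ V₂.Nonempty ∧ Disjoint V₁ V₂ ∧ V₁ ∪ V₂ = Set.univ ∧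
    ∀ x ∈ V₁, ∀ y ∈ V₂, G.Adj x y

-- ### helper lemmas

lemma mem_GDel_iff (G : SimpleGraph V) {v x : V} :
    x ∈ GDel G {v} ↔ x ≠ v ∧ ¬ G.Adj v x := by
  constructor
  · intro h
    simp [GDel, nbhd] at h
    tauto
  · intro h
    simp [GDel, nbhd]
    tauto

lemma bddAbove_indepSet [Fintype V] (G : SimpleGraph V) (W : Set V) :
    BddAbove {n | ∃ S : Finset V, IsIndepOn G W ↑S ∧ S.card = n} := by
  refine ⟨Fintype.card V, ?_⟩
  rintro n ⟨S, _, rfl⟩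
  exact le_trans (Finset.card_le_univ S) (le_of_eq (Finset.card_univ))

lemma nonempty_indepSet (G : SimpleGraph V) (W : Set V) :
    {n | ∃ S : Finset V, IsIndepOn G W ↑S ∧ S.card = n}.Nonempty := by
  exact ⟨0, ∅, ⟨by simp, by simp⟩, by simp⟩

lemma card_le_indepNumOn [Fintype V] (G : SimpleGraph V) {W : Set V} {S : Finset V}
    (h : IsIndepOn G W ↑S) : S.card ≤ indepNumOn G W :=
  le_csSup (bddAbove_indepSet G W) ⟨S, h, rfl⟩

lemma indepNumOn_mono [Fintype V] (G : SimpleGraph V) {W₁ W₂ : Set V} (h : W₁ ⊆ W₂) :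
    indepNumOn G W₁ ≤ indepNumOn G W₂ := by
  refine csSup_le (nonempty_indepSet G W₁) ?_
  rintro n ⟨S, hS, rfl⟩
  exact card_le_indepNumOn G ⟨hS.1.trans h, hS.2⟩

lemma exists_indep_card_indepNumOn [Fintype V] (G : SimpleGraph V) (W : Set V) :
    ∃ S : Finset V, IsIndepOn G W ↑S ∧ S.card = indepNumOn G W :=
  Nat.sSup_mem (nonempty_indepSet G W) (bddAbove_indepSet G W)

lemma extend_maximal [Fintype V] (G : SimpleGraph V) {W : Set V} (S : Finset V)
    (h : IsIndepOn G W ↑S) : ∃ T, S ⊆ T ∧ MaxIndepOn G W T := by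
  classical
  set P : Set ℕ := {n | ∃ T : Finset V, (S ⊆ T ∧ IsIndepOn G W ↑T) ∧ T.card = n} with hP
  have hne : P.Nonempty := ⟨S.card, S, ⟨le_refl _, h⟩, rfl⟩
  have hbdd : BddAbove P := by
    refine ⟨Fintype.card V, ?_⟩
    rintro n ⟨T, _, rfl⟩
    exact le_trans (Finset.card_le_univ T) (le_of_eq (Finset.card_univ))
  obtain ⟨T, ⟨hST, hTind⟩, hTcard⟩ := Nat.sSup_mem hne hbdd
  refine ⟨T, hST, hTind, ?_⟩
  intro y hyW hyT hins
  have hmem : (insert y T).card ∈ P :=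
    ⟨insert y T, ⟨hST.trans (Finset.subset_insert _ _), by rwa [Finset.coe_insert]⟩, rfl⟩
  have := le_csSup hbdd hmem
  rw [Finset.card_insert_of_notMem hyT, hTcard] at this
  omega

lemma exists_maxIndepOn [Fintype V] (G : SimpleGraph V) (W : Set V) :
    ∃ T, MaxIndepOn G W T := by
  obtain ⟨T, _, hT⟩ := extend_maximal G (∅ : Finset V) ⟨by simp, by simp⟩
  exact ⟨T, hT⟩

lemma exists_adj_of_not_indep (G : SimpleGraph V) {W : Set V} {S : Finset V} {u : V}
    (hsub : (insert u ↑S : Set V) ⊆ W) (hind : ∀ a ∈ S, ∀ b ∈ S, ¬ G.Adj a b)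
    (h : ¬ IsIndepOn G W (insert u ↑S)) : ∃ d ∈ S, G.Adj u d := by
  by_contra hc
  push_neg at hc
  apply h
  refine ⟨hsub, ?_⟩
  intro a ha b hb hadj
  rcases Set.mem_insert_iff.1 ha with h1 | h1
  · rcases Set.mem_insert_iff.1 hb with h2 | h2
    · exact G.irrefl (h1 ▸ h2 ▸ hadj)
    · exact hc b h2 (h1 ▸ hadj)
  · rcases Set.mem_insert_iff.1 hb with h2 | h2
    · exact hc a h1 (h2 ▸ hadj.symm)
    · exact hind a h1 b h2 hadj

lemma shed [Fintype V] (G : SimpleGraph V) {U : Set V} (h : W2On G U) {x : V} (hx : x ∈ U)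
    (A : Finset V) (hAU : ∀ a ∈ A, a ∈ U) (hAind : ∀ a ∈ A, ∀ b ∈ A, ¬ G.Adj a b)
    (hAx : ∀ a ∈ A, ¬ G.Adj x a ∧ a ≠ x) :
    ∃ t ∈ U, G.Adj x t ∧ ∀ a ∈ A, ¬ G.Adj t a := by
  classical
  by_contra hcon
  push_neg at hcon
  -- every neighbor of x in U has a neighbor in A
  have hcon' : ∀ t ∈ U, G.Adj x t → ∃ a ∈ A, G.Adj t a := fun t ht hadj => hcon t ht hadj
  set U' : Set V := {y | y ∈ U ∧ ¬ G.Adj x y ∧ y ≠ x} with hU'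
  have hAU' : (↑A : Set V) ⊆ U' := by
    intro a ha
    simp only [Finset.mem_coe] at ha
    exact ⟨hAU a ha, (hAx a ha).1, (hAx a ha).2⟩
  have hAindep : IsIndepOn G U' ↑A := ⟨hAU', fun a ha b hb => hAind a ha b hb⟩
  obtain ⟨A', hsub, hmax⟩ := extend_maximal G A hAindep
  have hA'U' : (↑A' : Set V) ⊆ U' := hmax.1.1
  have hA'ind := hmax.1.2
  -- A' is maximal independent on U \ {x}
  have claim1 : MaxIndepOn G (U \ {x}) A' := by
    refine ⟨⟨?_, hA'ind⟩, ?_⟩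
    · intro a ha
      obtain ⟨h1, _, h3⟩ := hA'U' ha
      exact ⟨h1, h3⟩
    · intro y hy hyA' hins
      obtain ⟨hyU, hyx⟩ := hy
      by_cases hxy : G.Adj x y
      · obtain ⟨a, haA, hya⟩ := hcon' y hyU hxy
        have haA' : a ∈ (insert y ↑A' : Set V) :=
          Set.mem_insert_of_mem _ (Finset.mem_coe.2 (hsub haA))
        exact hins.2 (Set.mem_insert _ _) haA' hya
      · have hyU' : y ∈ U' := ⟨hyU, hxy, hyx⟩
        apply hmax.2 y hyU' hyA'
        refine ⟨?_, hins.2⟩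
        intro z hz
        rcases Set.mem_insert_iff.1 hz with rfl | hz
        · exact hyU'
        · exact hA'U' hz
  obtain ⟨hno, hwcU, hdel⟩ := h
  obtain ⟨hwcdel, hnum⟩ := hdel x hx
  have hcard : A'.card = indepNumOn G (U \ {x}) := hwcdel A' claim1
  have hxA' : x ∉ A' := fun hmem => (hA'U' hmem).2.2 rfl
  have hindep2 : IsIndepOn G U (insert x ↑A' : Set V) := by
    refine ⟨?_, ?_⟩
    · intro z hz
      rcases Set.mem_insert_iff.1 hz with rfl | hz
      · exact hx
      · exact (hA'U' hz).1
    · intro a ha b hb hadj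
      rcases Set.mem_insert_iff.1 ha with h1 | h1
      · rcases Set.mem_insert_iff.1 hb with h2 | h2
        · exact G.irrefl (h1 ▸ h2 ▸ hadj)
        · exact (hA'U' h2).2.1 (h1 ▸ hadj)
      · rcases Set.mem_insert_iff.1 hb with h2 | h2
        · exact (hA'U' h1).2.1 (h2 ▸ hadj.symm)
        · exact hA'ind h1 h2 hadj
  have hle : (insert x A').card ≤ indepNumOn G U := by
    apply card_le_indepNumOn G
    rwa [Finset.coe_insert]
  rw [Finset.card_insert_of_notMem hxA', hcard, hnum] at hle
  omega

lemma master [Fintype V] (G : SimpleGraph V)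
    (hcomp : ∀ v : V, ∀ C : (G.induce (GDel G {v})).ConnectedComponent,
      (∃ x y : GDel G {v}, x ∈ C.supp ∧ y ∈ C.supp ∧ G.Adj x.1 y.1) →
        W2On G (Subtype.val '' C.supp))
    (x : V) (E : Finset V)
    (hEind : ∀ a ∈ E, ∀ b ∈ E, ¬ G.Adj a b)
    (hEx : ∀ d ∈ E, ¬ G.Adj x d ∧ d ≠ x)
    (hdom : ∀ u, G.Adj x u → ∃ d ∈ E, G.Adj u d)
    (s : V) (hs : s ∈ E) (u : V) (hxu : G.Adj x u) (hsu : ¬ G.Adj s u) : False := by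
  classical
  have hxG : x ∈ GDel G {s} := by
    rw [mem_GDel_iff]
    exact ⟨fun h => (hEx s hs).2 h.symm, fun h => (hEx s hs).1 h.symm⟩
  have hune : u ≠ s := by
    intro h
    exact (hEx s hs).1 (h ▸ hxu)
  have huG : u ∈ GDel G {s} := (mem_GDel_iff G).2 ⟨hune, fun h => hsu h⟩
  set xx : GDel G {s} := ⟨x, hxG⟩ with hxx
  set uu : GDel G {s} := ⟨u, huG⟩ with huu
  set C := (G.induce (GDel G {s})).connectedComponentMk xx with hC
  have hadjind : (G.induce (GDel G {s})).Adj xx uu := by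
    simp [SimpleGraph.comap_adj, hxu]
    exact hxu
  have hxxC : xx ∈ C.supp := by rw [SimpleGraph.ConnectedComponent.mem_supp_iff]
  have huuC : uu ∈ C.supp := by
    rw [SimpleGraph.ConnectedComponent.mem_supp_iff, hC]
    exact (SimpleGraph.ConnectedComponent.sound hadjind.reachable).symm
  have hW2 := hcomp s C ⟨xx, uu, hxxC, huuC, hxu⟩
  set U : Set V := Subtype.val '' C.supp with hU
  have hxU : x ∈ U := ⟨xx, hxxC, rfl⟩
  set A : Finset V := E.filter (fun d => d ∈ U) with hA
  have hAE : ∀ a ∈ A, a ∈ E := fun a ha => (Finset.mem_filter.1 ha).1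
  obtain ⟨t, htU, hadjxt, hnt⟩ :=
    shed G hW2 hxU A
      (fun a ha => (Finset.mem_filter.1 ha).2)
      (fun a ha b hb => hEind a (hAE a ha) b (hAE b hb))
      (fun a ha => hEx a (hAE a ha))
  -- t itself is in GDel G {s}
  obtain ⟨tt, httC, htt⟩ := htU
  have htG : t ∈ GDel G {s} := htt ▸ tt.2
  have hst : ¬ G.Adj s t := fun h => ((mem_GDel_iff G).1 htG).2 h
  obtain ⟨d, hdE, htd⟩ := hdom t hadjxt
  by_cases hds : d = s
  · exact hst (hds ▸ htd).symm
  · have hdG : d ∈ GDel G {s} := (mem_GDel_iff G).2 ⟨hds, fun h => hEind s hs d hdE h⟩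
    set dd : GDel G {s} := ⟨d, hdG⟩ with hdd
    have hadjtd : (G.induce (GDel G {s})).Adj tt dd := by
      simp [SimpleGraph.comap_adj, htt, htd]
      exact htd
    have hddC : dd ∈ C.supp := by
      rw [SimpleGraph.ConnectedComponent.mem_supp_iff]
      have h1 : (G.induce (GDel G {s})).connectedComponentMk tt = C :=
        (SimpleGraph.ConnectedComponent.mem_supp_iff _ _).1 httC
      rw [← h1]
      exact (SimpleGraph.ConnectedComponent.sound hadjtd.reachable).symm
    have hdU : d ∈ U := ⟨dd, hddC, rfl⟩
    have hdA : d ∈ A := Finset.mem_filter.2 ⟨hdE, hdU⟩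
    exact hnt d hdA htd

lemma crux [Fintype V] (G : SimpleGraph V) (hconn : G.Connected)
    (hwc : WellCovered G) (hloc : LocallyTriangleFree G) (hα : 3 ≤ indepNum G)
    (hjoin : ¬ IsJoin G)
    (hcomp : ∀ v : V, ∀ C : (G.induce (GDel G {v})).ConnectedComponent,
      (∃ x y : GDel G {v}, x ∈ C.supp ∧ y ∈ C.supp ∧ G.Adj x.1 y.1) →
        W2On G (Subtype.val '' C.supp))
    (v : V) (D : Finset V) (hD : MaxIndepOn G (GDel G {v}) D)
    (hdom : ∀ u, G.Adj v u → ∃ d ∈ D, G.Adj u d) : False := by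
  classical
  have hDW : ∀ d ∈ D, d ≠ v ∧ ¬ G.Adj v d := fun d hd =>
    (mem_GDel_iff G).1 (hD.1.1 (Finset.mem_coe.2 hd))
  have hDind : ∀ a ∈ D, ∀ b ∈ D, ¬ G.Adj a b := fun a ha b hb =>
    hD.1.2 (Finset.mem_coe.2 ha) (Finset.mem_coe.2 hb)
  -- A' : every maximal independent set of G_v dominating N(v) is complete to N(v)
  have A' : ∀ E : Finset V, MaxIndepOn G (GDel G {v}) E →
      (∀ u, G.Adj v u → ∃ d ∈ E, G.Adj u d) → ∀ s ∈ E, ∀ u, G.Adj v u → G.Adj s u := by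
    intro E hE hEdom s hs u hu
    by_contra hne
    refine master G hcomp v E ?_ ?_ hEdom s hs u hu hne
    · exact fun a ha b hb => hE.1.2 (Finset.mem_coe.2 ha) (Finset.mem_coe.2 hb)
    · intro d hd
      have := (mem_GDel_iff G).1 (hE.1.1 (Finset.mem_coe.2 hd))
      exact ⟨this.2, this.1⟩
  have hDM : ∀ d ∈ D, ∀ u, G.Adj v u → G.Adj d u := A' D hD hdom
  have hvD : v ∉ D := fun h => (hDW v h).1 rfl
  -- insert v D is a maximal independent set of G
  have hTmax : MaxIndepOn G Set.univ (insert v D) := by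
    refine ⟨⟨fun _ _ => Set.mem_univ _, ?_⟩, ?_⟩
    · intro a ha b hb hadj
      rw [Finset.coe_insert] at ha hb
      rcases Set.mem_insert_iff.1 ha with h1 | h1
      · rcases Set.mem_insert_iff.1 hb with h2 | h2
        · exact G.irrefl (h1 ▸ h2 ▸ hadj)
        · exact (hDW b h2).2 (h1 ▸ hadj)
      · rcases Set.mem_insert_iff.1 hb with h2 | h2
        · exact (hDW a h1).2 (h2 ▸ hadj.symm)
        · exact hDind a h1 b h2 hadj
    · intro y _ hyT hins
      have hyv : y ≠ v := fun h => hyT (h ▸ Finset.mem_insert_self _ _)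
      have hyD : y ∉ D := fun h => hyT (Finset.mem_insert_of_mem h)
      by_cases hyW : y ∈ GDel G {v}
      · apply hD.2 y hyW hyD
        refine ⟨?_, ?_⟩
        · intro z hz
          rcases Set.mem_insert_iff.1 hz with rfl | hz
          · exact hyW
          · exact hD.1.1 hz
        · intro a ha b hb
          have hmap : (insert y ↑D : Set V) ⊆ (insert y ↑(insert v D) : Set V) := by
            intro z hz
            rcases Set.mem_insert_iff.1 hz with rfl | hz
            · exact Set.mem_insert _ _
            · apply Set.mem_insert_of_mem
              rw [Finset.coe_insert]
              exact Set.mem_insert_of_mem _ hz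
          exact hins.2 (hmap ha) (hmap hb)
      · have hadjvy : G.Adj v y := by
          by_contra hvy
          exact hyW ((mem_GDel_iff G).2 ⟨hyv, hvy⟩)
        have hv' : v ∈ (insert y ↑(insert v D) : Set V) := by
          apply Set.mem_insert_of_mem
          rw [Finset.coe_insert]
          exact Set.mem_insert _ _
        exact hins.2 hv' (Set.mem_insert _ _) hadjvy
  have hcardT : (insert v D).card = indepNum G := hwc (insert v D) hTmax
  have hcardins : (insert v D).card = D.card + 1 := Finset.card_insert_of_notMem hvD
  have hD2 : 2 ≤ D.card := by omega
  -- v has a neighbor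
  have hK : ∃ u, G.Adj v u := by
    have h3V : 3 ≤ Fintype.card V := by
      obtain ⟨S, hSind, hScard⟩ := exists_indep_card_indepNumOn G Set.univ
      have : S.card ≤ Fintype.card V :=
        le_trans (Finset.card_le_univ S) (le_of_eq Finset.card_univ)
      have hSc : S.card = indepNum G := hScard
      omega
    obtain ⟨w, hw⟩ := Fintype.exists_ne_of_one_lt_card (by omega) v
    obtain ⟨p⟩ := hconn.preconnected v w
    cases p with
    | nil => exact absurd rfl hw
    | cons h _ => exact ⟨_, h⟩
  by_cases hM : ∀ x ∈ GDel G {v}, ∀ u, G.Adj v u → G.Adj x u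
  · -- join case
    apply hjoin
    refine ⟨{x | G.Adj v x}, {x | ¬ G.Adj v x}, hK, ⟨v, G.irrefl⟩, ?_, ?_, ?_⟩
    · rw [Set.disjoint_left]
      intro a ha hb
      exact hb ha
    · ext x
      simp only [Set.mem_union, Set.mem_setOf_eq, Set.mem_univ, iff_true]
      exact em _
    · intro a ha b hb
      by_cases hbv : b = v
      · exact hbv ▸ (Set.mem_setOf_eq ▸ ha).symm
      · have hbW : b ∈ GDel G {v} := (mem_GDel_iff G).2 ⟨hbv, hb⟩
        exact (hM b hbW a ha).symm
  · push_neg at hM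
    obtain ⟨w₁, hw₁W, u₁, hvu₁, hw₁u₁⟩ := hM
    -- F : any maximal independent set of G_v dominating N(v) is complete to w₁
    have F : ∀ E : Finset V, MaxIndepOn G (GDel G {v}) E →
        (∀ u, G.Adj v u → ∃ d ∈ E, G.Adj u d) → ∀ d ∈ E, G.Adj w₁ d := by
      intro E hE hEdom d₀ hd₀
      by_contra hnad
      have hd₀M : ∀ u, G.Adj v u → G.Adj d₀ u := A' E hE hEdom d₀ hd₀
      have hd₀W : d₀ ∈ GDel G {v} := hE.1.1 (Finset.mem_coe.2 hd₀)
      have hE₀ind : IsIndepOn G (GDel G {v}) ↑(insert w₁ {d₀} : Finset V) := by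
        refine ⟨?_, ?_⟩
        · intro z hz
          simp only [Finset.coe_insert, Finset.coe_singleton, Set.mem_insert_iff,
            Set.mem_singleton_iff] at hz
          rcases hz with rfl | rfl
          · exact hw₁W
          · exact hd₀W
        · intro a ha b hb hadj
          simp only [Finset.coe_insert, Finset.coe_singleton, Set.mem_insert_iff,
            Set.mem_singleton_iff] at ha hb
          rcases ha with rfl | rfl <;> rcases hb with rfl | rfl
          · exact G.irrefl hadj
          · exact hnad hadj
          · exact hnad hadj.symm
          · exact G.irrefl hadj
      obtain ⟨E₁, hsub₁, hmax₁⟩ := extend_maximal G _ hE₀ind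
      have hdom₁ : ∀ u, G.Adj v u → ∃ d ∈ E₁, G.Adj u d := fun u hu =>
        ⟨d₀, hsub₁ (Finset.mem_insert_of_mem (Finset.mem_singleton_self d₀)),
          (hd₀M u hu).symm⟩
      exact hw₁u₁ (A' E₁ hmax₁ hdom₁ w₁ (hsub₁ (Finset.mem_insert_self _ _)) u₁ hvu₁)
    have hDw₁ : ∀ d ∈ D, G.Adj w₁ d := F D hD hdom
    obtain ⟨d₁, hd₁⟩ := Finset.card_pos.1 (by omega : 0 < D.card)
    have hd₁W : d₁ ≠ v ∧ ¬ G.Adj v d₁ := hDW d₁ hd₁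
    by_cases hP : ∃ p ∈ GDel G {v}, G.Adj d₁ p ∧ ∀ d ∈ D, G.Adj p d → d = d₁
    · obtain ⟨p, hpW, hd₁p, hponly⟩ := hP
      obtain ⟨d₂, hd₂D, hd₂ne⟩ := Finset.exists_mem_ne (s := D) (by omega) d₁
      have hE₂ind : IsIndepOn G (GDel G {v}) ↑(insert p (D.erase d₁)) := by
        refine ⟨?_, ?_⟩
        · intro z hz
          rw [Finset.coe_insert] at hz
          rcases Set.mem_insert_iff.1 hz with rfl | hz
          · exact hpW
          · exact hD.1.1 (Finset.mem_coe.2 (Finset.mem_of_mem_erase (Finset.mem_coe.1 hz)))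
        · intro a ha b hb hadj
          rw [Finset.coe_insert] at ha hb
          have hnpd : ∀ d ∈ D.erase d₁, ¬ G.Adj p d := by
            intro d hd hpd
            exact (Finset.mem_erase.1 hd).1 (hponly d (Finset.mem_of_mem_erase hd) hpd)
          rcases Set.mem_insert_iff.1 ha with h1 | h1
          · rcases Set.mem_insert_iff.1 hb with h2 | h2
            · exact G.irrefl (h1 ▸ h2 ▸ hadj)
            · exact hnpd b (Finset.mem_coe.1 h2) (h1 ▸ hadj)
          · rcases Set.mem_insert_iff.1 hb with h2 | h2
            · exact hnpd a (Finset.mem_coe.1 h1) (h2 ▸ hadj.symm)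
            · exact hDind a (Finset.mem_of_mem_erase (Finset.mem_coe.1 h1)) b
                (Finset.mem_of_mem_erase (Finset.mem_coe.1 h2)) hadj
      obtain ⟨E₂', hsub₂, hmax₂⟩ := extend_maximal G _ hE₂ind
      have hdom₂ : ∀ u, G.Adj v u → ∃ d ∈ E₂', G.Adj u d := fun u hu =>
        ⟨d₂, hsub₂ (Finset.mem_insert_of_mem (Finset.mem_erase.2 ⟨hd₂ne, hd₂D⟩)),
          (hDM d₂ hd₂D u hu).symm⟩
      have hpw₁ : G.Adj w₁ p := F E₂' hmax₂ hdom₂ p (hsub₂ (Finset.mem_insert_self _ _))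
      exact hloc v d₁ (hD.1.1 (Finset.mem_coe.2 hd₁)) p hpW w₁ hw₁W
        ⟨hd₁p, hpw₁.symm, (hDw₁ d₁ hd₁).symm⟩
    · push_neg at hP
      have hE₃ind : ∀ a ∈ insert v (D.erase d₁), ∀ b ∈ insert v (D.erase d₁), ¬ G.Adj a b := by
        intro a ha b hb hadj
        rcases Finset.mem_insert.1 ha with h1 | h1
        · rcases Finset.mem_insert.1 hb with h2 | h2
          · exact G.irrefl (h1 ▸ h2 ▸ hadj)
          · exact (hDW b (Finset.mem_of_mem_erase h2)).2 (h1 ▸ hadj)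
        · rcases Finset.mem_insert.1 hb with h2 | h2
          · exact (hDW a (Finset.mem_of_mem_erase h1)).2 (h2 ▸ hadj.symm)
          · exact hDind a (Finset.mem_of_mem_erase h1) b (Finset.mem_of_mem_erase h2) hadj
      have hE₃x : ∀ d ∈ insert v (D.erase d₁), ¬ G.Adj d₁ d ∧ d ≠ d₁ := by
        intro d hd
        rcases Finset.mem_insert.1 hd with h1 | h1
        · exact ⟨fun h => hd₁W.2 (h1 ▸ h).symm, fun h => hd₁W.1 (h1 ▸ h).symm⟩
        · exact ⟨hDind d₁ hd₁ d (Finset.mem_of_mem_erase h1), (Finset.mem_erase.1 h1).1⟩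
      have hdom₃ : ∀ u, G.Adj d₁ u → ∃ d ∈ insert v (D.erase d₁), G.Adj u d := by
        intro u hu
        by_cases hvu : G.Adj v u
        · exact ⟨v, Finset.mem_insert_self _ _, hvu.symm⟩
        · have huv : u ≠ v := by
            rintro rfl
            exact hd₁W.2 hu.symm
          have huW : u ∈ GDel G {v} := (mem_GDel_iff G).2 ⟨huv, hvu⟩
          obtain ⟨d, hdD, hpd, hne⟩ := hP u huW hu
          exact ⟨d, Finset.mem_insert_of_mem (Finset.mem_erase.2 ⟨hne, hdD⟩), hpd⟩
      exact master G hcomp d₁ _ hE₃ind hE₃x hdom₃ v (Finset.mem_insert_self _ _) w₁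
        ((hDw₁ d₁ hd₁).symm) (fun h => ((mem_GDel_iff G).1 hw₁W).2 h)


/-- If `G` is connected, well-covered, locally triangle-free, `α(G) ≥ 3`, not a
join of two proper subgraphs, and every nontrivial connected component of `G_v`
is in `W₂` for every vertex `v`, then `G` is in `W₂`. -/
theorem stmt_18 [Fintype V] (G : SimpleGraph V) (hconn : G.Connected)
    (hwc : WellCovered G) (hloc : LocallyTriangleFree G) (hα : 3 ≤ indepNum G)
    (hjoin : ¬ IsJoin G)
    (hcomp : ∀ v : V, ∀ C : (G.induce (GDel G {v})).ConnectedComponent,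
      (∃ x y : GDel G {v}, x ∈ C.supp ∧ y ∈ C.supp ∧ G.Adj x.1 y.1) →
        W2On G (Subtype.val '' C.supp)) :
    W2 G := by
  classical
  have hadjall : ∀ x : V, ∃ u, G.Adj x u := by
    have h3V : 3 ≤ Fintype.card V := by
      obtain ⟨S, hSind, hScard⟩ := exists_indep_card_indepNumOn G Set.univ
      have h1 : S.card ≤ Fintype.card V :=
        le_trans (Finset.card_le_univ S) (le_of_eq Finset.card_univ)
      have hSc : S.card = indepNum G := hScard
      omega
    intro x
    obtain ⟨w, hw⟩ := Fintype.exists_ne_of_one_lt_card (by omega) x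
    obtain ⟨p⟩ := hconn.preconnected x w
    cases p with
    | nil => exact absurd rfl hw
    | cons h _ => exact ⟨_, h⟩
  have key : ∀ v : V, ∀ T : Finset V,
      MaxIndepOn G (Set.univ \ {v}) T → T.card = indepNum G := by
    intro v T hT
    have hTind : ∀ a ∈ T, ∀ b ∈ T, ¬ G.Adj a b := fun a ha b hb =>
      hT.1.2 (Finset.mem_coe.2 ha) (Finset.mem_coe.2 hb)
    by_cases hcase : ∃ t ∈ T, G.Adj v t
    · obtain ⟨t, htT, hvt⟩ := hcase
      have hTU : MaxIndepOn G Set.univ T := by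
        refine ⟨⟨fun _ _ => Set.mem_univ _, hT.1.2⟩, ?_⟩
        intro y _ hyT hins
        by_cases hyv : y = v
        · exact hins.2 (Set.mem_insert _ _)
            (Set.mem_insert_of_mem _ (Finset.mem_coe.2 htT)) (hyv ▸ hvt)
        · apply hT.2 y ⟨Set.mem_univ y, fun h => hyv (Set.mem_singleton_iff.1 h)⟩ hyT
          refine ⟨?_, hins.2⟩
          intro z hz
          rcases Set.mem_insert_iff.1 hz with h1 | h1
          · exact ⟨Set.mem_univ z, fun h => hyv (h1 ▸ Set.mem_singleton_iff.1 h)⟩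
          · exact hT.1.1 h1
      exact hwc T hTU
    · push_neg at hcase
      exfalso
      have hTW : (↑T : Set V) ⊆ GDel G {v} := by
        intro t ht
        refine (mem_GDel_iff G).2 ⟨?_, fun h => hcase t (Finset.mem_coe.1 ht) h⟩
        intro h
        exact (hT.1.1 ht).2 (Set.mem_singleton_iff.2 h)
      have hTmaxW : MaxIndepOn G (GDel G {v}) T := by
        refine ⟨⟨hTW, hT.1.2⟩, ?_⟩
        intro y hyW hyT hins
        have hyD : y ∈ Set.univ \ {v} :=
          ⟨Set.mem_univ y, fun h => ((mem_GDel_iff G).1 hyW).1 (Set.mem_singleton_iff.1 h)⟩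
        apply hT.2 y hyD hyT
        refine ⟨?_, hins.2⟩
        intro z hz
        rcases Set.mem_insert_iff.1 hz with h1 | h1
        · exact h1 ▸ hyD
        · exact hT.1.1 h1
      have hdomv : ∀ u, G.Adj v u → ∃ d ∈ T, G.Adj u d := by
        intro u hu
        have huD : u ∈ Set.univ \ {v} :=
          ⟨Set.mem_univ u, fun h => G.irrefl ((Set.mem_singleton_iff.1 h) ▸ hu)⟩
        have huT : u ∉ T := fun h => hcase u h hu
        have hnind := hT.2 u huD huT
        refine exists_adj_of_not_indep G ?_ hTind hnind
        intro z hz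
        rcases Set.mem_insert_iff.1 hz with h1 | h1
        · exact h1 ▸ huD
        · exact hT.1.1 h1
      exact crux G hconn hwc hloc hα hjoin hcomp v T hTmaxW hdomv
  have hnum : ∀ v : V, indepNumOn G (Set.univ \ {v}) = indepNum G := by
    intro v
    apply le_antisymm
    · exact indepNumOn_mono G Set.diff_subset
    · obtain ⟨T, hT⟩ := exists_maxIndepOn G (Set.univ \ {v})
      calc indepNum G = T.card := (key v T hT).symm
        _ ≤ indepNumOn G (Set.univ \ {v}) := card_le_indepNumOn G hT.1
  refine ⟨?_, hwc, ?_⟩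
  · intro x _
    obtain ⟨u, hu⟩ := hadjall x
    exact ⟨u, Set.mem_univ u, hu⟩
  · intro v _
    constructor
    · intro T hT
      rw [hnum v]
      exact key v T hT
    · exact hnum v
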